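/- In two dimensions, with the multiplier m odd (and homogeneous of degree 0, smooth away from the origin, satisfying m(−ξ) = conj(m(ξ)) and ξ·m(ξ) = 0 for ξ ≠ 0), for every smooth mean-zero θ: 𝕋² → ℝ the drift velocity satisfies u^l = T^l[θ] = (∇^⊥ Lθ)^l, where ∇^⊥ = (−∂₂, ∂₁) and L = (−Δ)^{-1/2}(R₂T¹ − R₁T²). Consequently ∫_{𝕋²} θ(x) u^l(x) ∂_l (Lθ)(x) dx = 0, i.e. ∫_{𝕋²} θ (∇^⊥Lθ)·∇(Lθ) dx = 0. -/

import Mathlib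

open MeasureTheory Filter Topology

noncomputable section

/-- The unit cube in `ℝⁿ`, a fundamental domain for the torus `𝕋ⁿ = ℝⁿ/ℤⁿ`. -/
def cube (n : ℕ) : Set (Fin n → ℝ) := Set.univ.pi fun _ => Set.Ico (0 : ℝ) 1

/-- `ℤⁿ`-periodicity of a function on `ℝⁿ`, i.e. the function descends to `𝕋ⁿ`. -/
def ZPer {n : ℕ} {α : Type*} (f : (Fin n → ℝ) → α) : Prop :=
  ∀ (k : Fin n → ℤ) (x : Fin n → ℝ), f (x + fun i => (k i : ℝ)) = f x

/-- Fourier coefficient of a periodic function, w.r.t. the character `e^{2πi k·x}`. -/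
def fcoeff {n : ℕ} (f : (Fin n → ℝ) → ℂ) (k : Fin n → ℤ) : ℂ :=
  ∫ x in cube n, f x * Complex.exp (-(2 * Real.pi * Complex.I * ∑ i, (k i : ℝ) * x i))

/-- `u = T[θ]` where `T` is the Fourier multiplier operator with symbol `m`
(`m` acts on nonzero frequencies; the zero mode of `u` vanishes). -/
def IsDrift {n : ℕ} (m : (Fin n → ℝ) → Fin n → ℂ)
    (θ : (Fin n → ℝ) → ℝ) (u : (Fin n → ℝ) → Fin n → ℝ) : Prop :=
  ∀ (l : Fin n) (k : Fin n → ℤ),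
    fcoeff (fun x => (u x l : ℂ)) k =
      (if k = 0 then 0 else m (fun i => (k i : ℝ)) l) * fcoeff (fun x => (θ x : ℂ)) k

/-- Standing hypotheses on the symbol `m` of the constitutive operator `T`. -/
structure GoodSymbol (n : ℕ) (m : (Fin n → ℝ) → Fin n → ℂ) : Prop where
  homog : ∀ (c : ℝ) (ξ : Fin n → ℝ), 0 < c → ξ ≠ 0 → m (c • ξ) = m ξ
  conj_symm : ∀ ξ : Fin n → ℝ, ξ ≠ 0 → m (-ξ) = star (m ξ)
  div_free : ∀ ξ : Fin n → ℝ, ξ ≠ 0 → (∑ l, (ξ l : ℂ) * m ξ l) = 0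
  smooth : ContDiffOn ℝ (⊤ : ℕ∞) m {ξ | ξ ≠ 0}

/-- The multiplier is odd. -/
def OddSymbol {n : ℕ} (m : (Fin n → ℝ) → Fin n → ℂ) : Prop :=
  ∀ ξ : Fin n → ℝ, ξ ≠ 0 → m (-ξ) = -m ξ

/-- Weak solution of the active scalar equation on `I × 𝕋ⁿ`:
periodicity, the constitutive law `u = T[θ]` (for a.e. time in `I`), and the
distributional form of `∂ₜθ + div(θu) = 0` against smooth periodic test functions
compactly supported in time inside `I`. -/
def WeakSolutionOn {n : ℕ} (I : Set ℝ) (m : (Fin n → ℝ) → Fin n → ℂ)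
    (θ : ℝ → (Fin n → ℝ) → ℝ) (u : ℝ → (Fin n → ℝ) → Fin n → ℝ) : Prop :=
  (∀ t, ZPer (θ t)) ∧ (∀ t, ZPer (u t)) ∧
  (∀ᵐ t ∂(volume.restrict I), IsDrift m (θ t) (u t)) ∧
  ∀ φ : ℝ × (Fin n → ℝ) → ℝ, ContDiff ℝ (⊤ : ℕ∞) φ →
    (∀ (t : ℝ) (k : Fin n → ℤ) (x : Fin n → ℝ), φ (t, x + fun i => (k i : ℝ)) = φ (t, x)) →
    (∃ a b : ℝ, Set.Icc a b ⊆ I ∧ ∀ t x, t ∉ Set.Icc a b → φ (t, x) = 0) →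
    (∫ t : ℝ, ∫ x in cube n,
        (θ t x * fderiv ℝ φ (t, x) (1, 0)
          + θ t x * ∑ l, u t x l * fderiv ℝ φ (t, x) (0, Pi.single l 1))) = 0

/-- Global weak solution (on all of `ℝ × 𝕋ⁿ`). -/
def GlobalWeakSolution {n : ℕ} (m : (Fin n → ℝ) → Fin n → ℂ)
    (θ : ℝ → (Fin n → ℝ) → ℝ) (u : ℝ → (Fin n → ℝ) → Fin n → ℝ) : Prop :=
  WeakSolutionOn Set.univ m θ u

/-- Jointly Hölder continuous of exponent `α` in time and space. -/
def HolderCts {n : ℕ} (α : ℝ) (f : ℝ → (Fin n → ℝ) → ℝ) : Prop :=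
  ∃ C : ℝ, ∀ (t s : ℝ) (x y : Fin n → ℝ), |f t x - f s y| ≤ C * dist (t, x) (s, y) ^ α

/-- vanishing outside `I × 𝕋ⁿ`. -/
def SuppInTime {n : ℕ} {α : Type*} [Zero α] (I : Set ℝ) (f : ℝ → (Fin n → ℝ) → α) : Prop :=
  ∀ t ∉ I, ∀ x, f t x = 0

/-- compact time-support inside `I`. -/
def CptSuppInTime {n : ℕ} {α : Type*} [Zero α] (I : Set ℝ) (f : ℝ → (Fin n → ℝ) → α) : Prop :=
  ∃ a b : ℝ, Set.Icc a b ⊆ I ∧ ∀ t ∉ Set.Icc a b, ∀ x, f t x = 0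

/-- The symbol of `L = (-Δ)^{-1/2}(R₂T¹ - R₁T²)` on the integer frequency lattice
(with the character `e^{2πik·x}`; by degree-0 homogeneity `m(2πk) = m(k)`). -/
def Lsym (m : (Fin 2 → ℝ) → Fin 2 → ℂ) (k : Fin 2 → ℤ) : ℂ :=
  if k = 0 then 0 else
    (Complex.I * (k 1 : ℝ) * m (fun i => (k i : ℝ)) 0
        - Complex.I * (k 0 : ℝ) * m (fun i => (k i : ℝ)) 1) /
      (2 * Real.pi * (((k 0 : ℝ)) ^ 2 + ((k 1 : ℝ)) ^ 2))

/-- `g = L f` in the Fourier multiplier sense. -/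
def IsLOf (m : (Fin 2 → ℝ) → Fin 2 → ℂ) (f g : (Fin 2 → ℝ) → ℝ) : Prop :=
  ∀ k : Fin 2 → ℤ,
    fcoeff (fun x => (g x : ℂ)) k = Lsym m k * fcoeff (fun x => (f x : ℂ)) k

/-- spatial partial derivative `∂_l`. -/
def pd (l : Fin 2) (f : (Fin 2 → ℝ) → ℝ) : (Fin 2 → ℝ) → ℝ :=
  fun x => fderiv ℝ f x (Pi.single l 1)


/-! ### Auxiliary machinery: Fourier analysis on the 2-torus -/

section Aux

open Complex

/-- The 1D character `t ↦ e^{-2πikt}`. -/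
noncomputable def E1 (k : ℤ) (t : ℝ) : ℂ := Complex.exp ((-(2 * Real.pi * Complex.I * k)) * t)

lemma E1_hasDerivAt (k : ℤ) (t : ℝ) :
    HasDerivAt (E1 k) ((-(2 * Real.pi * Complex.I * k)) * E1 k t) t := by
  have h1 : HasDerivAt (fun t : ℝ => ((-(2 * Real.pi * Complex.I * k)) * (t:ℂ)))
      (-(2 * Real.pi * Complex.I * k)) t := by
    simpa using (Complex.ofRealCLM.hasDerivAt (x := t)).const_mul (-(2 * Real.pi * Complex.I * k))
  unfold E1
  convert h1.cexp using 1
  ring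

lemma E1_continuous (k : ℤ) : Continuous (E1 k) := by
  unfold E1; fun_prop

lemma E1_norm (k : ℤ) (t : ℝ) : ‖E1 k t‖ = 1 := by
  rw [E1, show (-(2 * Real.pi * Complex.I * k)) * t
    = (((-(2 * Real.pi * k * t) : ℝ)) : ℂ) * Complex.I by push_cast; ring]
  exact Complex.norm_exp_ofReal_mul_I _

lemma E1_zero (k : ℤ) : E1 k 0 = 1 := by simp [E1]

lemma E1_one (k : ℤ) : E1 k 1 = 1 := by
  have : (-(2 * Real.pi * Complex.I * k)) * ((1:ℝ):ℂ) = (-k : ℤ) * (2 * Real.pi * Complex.I) := by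
    push_cast; ring
  rw [E1, this, Complex.exp_int_mul_two_pi_mul_I]

lemma ico_int (f : ℝ → ℂ) : ∫ t in Set.Ico (0:ℝ) 1, f t = ∫ t in (0:ℝ)..1, f t := by
  rw [intervalIntegral.integral_of_le zero_le_one, MeasureTheory.integral_Ioc_eq_integral_Ioo,
    MeasureTheory.integral_Ico_eq_integral_Ioo]

/-- 1D integration by parts for the derivative coefficient. -/
lemma oneD_deriv_coeff (g g' : ℝ → ℂ) (hd : ∀ t, HasDerivAt g (g' t) t)
    (hc : Continuous g') (hper : ∀ t, g (t + 1) = g t) (k : ℤ) :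
    (∫ t in Set.Ico (0:ℝ) 1, g' t * E1 k t)
      = (2 * Real.pi * Complex.I * k) * ∫ t in Set.Ico (0:ℝ) 1, g t * E1 k t := by
  rw [ico_int, ico_int]
  have hibp := intervalIntegral.integral_mul_deriv_eq_deriv_mul
    (u := E1 k) (u' := fun t => (-(2 * Real.pi * Complex.I * k)) * E1 k t)
    (v := g) (v' := g') (a := 0) (b := 1)
    (fun x _ => E1_hasDerivAt k x) (fun x _ => hd x)
    (((continuous_const.mul (E1_continuous k))).intervalIntegrable 0 1)
    (hc.intervalIntegrable 0 1)
  have h10 : g 1 = g 0 := by simpa using hper 0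
  rw [E1_one, E1_zero, h10] at hibp
  have hswap : ∀ t, g' t * E1 k t = E1 k t * g' t := fun t => mul_comm _ _
  simp_rw [hswap]
  rw [hibp]
  rw [show (fun t => -(2 * ↑Real.pi * Complex.I * ↑k) * E1 k t * g t)
      = (fun t => (-(2 * ↑Real.pi * Complex.I * ↑k)) * (g t * E1 k t)) from funext fun t => by ring]
  rw [intervalIntegral.integral_const_mul]
  ring

/-- 1D uniqueness: a continuous 1-periodic function with vanishing Fourier coefficients is zero. -/
lemma oneD_unique (g : ℝ → ℂ) (hg : Continuous g) (hper : ∀ t, g (t + 1) = g t)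
    (h0 : ∀ k : ℤ, (∫ t in Set.Ico (0:ℝ) 1, g t * E1 k t) = 0) : ∀ t, g t = 0 := by
  haveI : Fact ((0:ℝ) < 1) := ⟨one_pos⟩
  set G : AddCircle (1:ℝ) → ℂ := AddCircle.liftIco 1 0 g with hG
  have hGc : Continuous G :=
    AddCircle.liftIco_zero_continuous (by simpa using (hper 0).symm) hg.continuousOn
  have hGcoeff : ∀ n : ℤ, fourierCoeff G n = 0 := by
    intro n
    rw [hG]
    rw [fourierCoeff_liftIco_eq]
    rw [fourierCoeffOn_eq_integral]
    have : ∀ t : ℝ, fourier (-n) (t : AddCircle ((0:ℝ) + 1 - 0)) • g t = g t * E1 n t := by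
      intro t
      rw [smul_eq_mul, mul_comm]
      congr 1
      rw [fourier_coe_apply, E1]
      congr 1
      push_cast
      ring
    simp_rw [this]
    norm_num
    rw [← ico_int, h0 n]
  set Gc : C(AddCircle (1:ℝ), ℂ) := ⟨G, hGc⟩ with hGcdef
  have hGcoeff2 : ∀ n : ℤ, fourierCoeff (⇑Gc) n = 0 := hGcoeff
  have hs : Summable (fourierCoeff (⇑Gc)) := by
    apply Summable.congr summable_zero
    intro n; exact (hGcoeff2 n).symm
  have hsum : ∀ x : AddCircle (1:ℝ), G x = 0 := by
    intro x
    have h2 := has_pointwise_sum_fourier_series_of_summable hs x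
    simp only [hGcoeff2, zero_smul] at h2
    exact h2.unique hasSum_zero
  have hint : ∀ (n : ℤ) (t : ℝ), g (t + n) = g t := by
    intro n t
    have : Function.Periodic g 1 := hper
    simpa using (this.int_mul n) t
  intro t
  have h1 : g t = g (Int.fract t) := by
    conv_lhs => rw [← Int.fract_add_floor t]
    exact hint ⌊t⌋ (Int.fract t)
  rw [h1, show g (Int.fract t) = G ((Int.fract t : ℝ) : AddCircle (1:ℝ)) from
    (AddCircle.liftIco_coe_apply ⟨Int.fract_nonneg t, by simpa using Int.fract_lt_one t⟩).symm]
  exact hsum _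

/-- The identification of `Fin 2 → ℝ` with `ℝ × ℝ`. -/
noncomputable def e2 : (Fin 2 → ℝ) ≃ᵐ ℝ × ℝ := MeasurableEquiv.piFinTwo fun _ => ℝ

noncomputable def q2 (p : ℝ × ℝ) : Fin 2 → ℝ := e2.symm p

lemma e2_apply (x : Fin 2 → ℝ) : e2 x = (x 0, x 1) := rfl

lemma q2_e2 (x : Fin 2 → ℝ) : q2 (e2 x) = x := e2.symm_apply_apply x

lemma e2_q2 (p : ℝ × ℝ) : e2 (q2 p) = p := e2.apply_symm_apply p

lemma q2_fst (p : ℝ × ℝ) : q2 p 0 = p.1 := congrArg Prod.fst (e2_q2 p)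
lemma q2_snd (p : ℝ × ℝ) : q2 p 1 = p.2 := congrArg Prod.snd (e2_q2 p)

lemma q2_continuous : Continuous q2 := by
  apply continuous_pi
  intro i
  fin_cases i
  · exact (continuous_fst : Continuous fun p : ℝ × ℝ => p.1).congr fun p => (q2_fst p).symm
  · exact (continuous_snd : Continuous fun p : ℝ × ℝ => p.2).congr fun p => (q2_snd p).symm

lemma cube_preimage : cube 2 = e2 ⁻¹' (Set.Ico (0:ℝ) 1 ×ˢ Set.Ico (0:ℝ) 1) := by
  ext x
  simp only [cube, Set.mem_pi, Set.mem_univ, forall_true_left, Set.mem_preimage, e2_apply,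
    Set.mem_prod]
  constructor
  · intro h; exact ⟨h 0, h 1⟩
  · intro h i; fin_cases i <;> simp [h.1, h.2]

lemma integrand_split (f : (Fin 2 → ℝ) → ℂ) (k : Fin 2 → ℤ) (x : Fin 2 → ℝ) :
    f x * Complex.exp (-(2 * Real.pi * Complex.I * ∑ i, (k i : ℝ) * x i))
      = f (q2 (e2 x)) * E1 (k 0) (e2 x).1 * E1 (k 1) (e2 x).2 := by
  rw [q2_e2, e2_apply]
  simp only [E1, mul_assoc, ← Complex.exp_add]
  congr 2
  rw [Fin.sum_univ_two]
  push_cast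
  ring

lemma F_integrableOn (f : (Fin 2 → ℝ) → ℂ) (hf : Continuous f) (k : Fin 2 → ℤ) :
    MeasureTheory.IntegrableOn (fun p : ℝ × ℝ => f (q2 p) * E1 (k 0) p.1 * E1 (k 1) p.2)
      (Set.Ico (0:ℝ) 1 ×ˢ Set.Ico (0:ℝ) 1) volume := by
  have hc : Continuous fun p : ℝ × ℝ => f (q2 p) * E1 (k 0) p.1 * E1 (k 1) p.2 :=
    (((hf.comp q2_continuous).mul ((E1_continuous (k 0)).comp continuous_fst)).mul
      ((E1_continuous (k 1)).comp continuous_snd))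
  exact (hc.continuousOn.integrableOn_compact (isCompact_Icc.prod isCompact_Icc)).mono_set
    (Set.prod_mono Set.Ico_subset_Icc_self Set.Ico_subset_Icc_self)

lemma fcoeff_prod (f : (Fin 2 → ℝ) → ℂ) (k : Fin 2 → ℤ) :
    fcoeff f k = ∫ p in Set.Ico (0:ℝ) 1 ×ˢ Set.Ico (0:ℝ) 1,
        f (q2 p) * E1 (k 0) p.1 * E1 (k 1) p.2 := by
  rw [fcoeff]
  simp_rw [integrand_split f k]
  rw [cube_preimage]
  exact (volume_preserving_piFinTwo fun _ => ℝ).setIntegral_preimage_emb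
    e2.measurableEmbedding (fun p : ℝ × ℝ => f (q2 p) * E1 (k 0) p.1 * E1 (k 1) p.2)
    (Set.Ico (0:ℝ) 1 ×ˢ Set.Ico (0:ℝ) 1)

lemma fcoeff_rep (f : (Fin 2 → ℝ) → ℂ) (hf : Continuous f) (k : Fin 2 → ℤ) :
    fcoeff f k = ∫ a in Set.Ico (0:ℝ) 1, ∫ b in Set.Ico (0:ℝ) 1,
        f (q2 (a, b)) * E1 (k 0) a * E1 (k 1) b := by
  rw [fcoeff_prod, MeasureTheory.Measure.volume_eq_prod]
  exact MeasureTheory.setIntegral_prod _ (by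
    have := F_integrableOn f hf k
    rwa [MeasureTheory.Measure.volume_eq_prod] at this)

lemma fcoeff_rep' (f : (Fin 2 → ℝ) → ℂ) (hf : Continuous f) (k : Fin 2 → ℤ) :
    fcoeff f k = ∫ b in Set.Ico (0:ℝ) 1, ∫ a in Set.Ico (0:ℝ) 1,
        f (q2 (a, b)) * E1 (k 0) a * E1 (k 1) b := by
  rw [fcoeff_prod, MeasureTheory.Measure.volume_eq_prod, ← MeasureTheory.Measure.prod_restrict]
  apply MeasureTheory.integral_prod_symm
  rw [MeasureTheory.Measure.prod_restrict]
  have := F_integrableOn f hf k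
  rwa [MeasureTheory.Measure.volume_eq_prod, MeasureTheory.IntegrableOn] at this

lemma q2_eq (p : ℝ × ℝ) : q2 p = ![p.1, p.2] := by
  funext i
  match i with
  | ⟨0, _⟩ => exact q2_fst p
  | ⟨1, _⟩ => exact q2_snd p

lemma q2_pair_eval (a b : ℝ) (i : Fin 2) : q2 (a, b) i = ![a, b] i := by rw [q2_eq]

lemma q2_shift1 (a b : ℝ) :
    q2 (a, b + 1) = q2 (a, b) + fun i => (((Pi.single 1 1 : Fin 2 → ℤ)) i : ℝ) := by
  funext i
  rw [Pi.add_apply, q2_pair_eval, q2_pair_eval]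
  match i with
  | ⟨0, _⟩ => simp
  | ⟨1, _⟩ => simp

lemma q2_shift0 (a b : ℝ) :
    q2 (a + 1, b) = q2 (a, b) + fun i => (((Pi.single 0 1 : Fin 2 → ℤ)) i : ℝ) := by
  funext i
  rw [Pi.add_apply, q2_pair_eval, q2_pair_eval]
  match i with
  | ⟨0, _⟩ => simp
  | ⟨1, _⟩ => simp

lemma per_bound (f : (Fin 2 → ℝ) → ℂ) (hf : Continuous f) (hper : ZPer f) :
    ∃ C : ℝ, ∀ x, ‖f x‖ ≤ C := by
  have hK : IsCompact (Set.univ.pi fun _ : Fin 2 => Set.Icc (0:ℝ) 1) :=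
    isCompact_univ_pi fun _ => isCompact_Icc
  obtain ⟨C, hC⟩ := hK.exists_bound_of_continuousOn hf.continuousOn
  refine ⟨C, fun x => ?_⟩
  have hx : (fun i => Int.fract (x i)) + (fun i => ((⌊x i⌋ : ℤ) : ℝ)) = x := by
    funext i; simp [Int.fract_add_floor]
  have := hper (fun i => ⌊x i⌋) (fun i => Int.fract (x i))
  rw [hx] at this
  rw [this]
  exact hC _ (by
    intro i _
    exact ⟨Int.fract_nonneg _, (Int.fract_lt_one _).le⟩)

/-- 2D uniqueness: a continuous `ℤ²`-periodic function with vanishing Fourier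
coefficients vanishes identically. -/
lemma twoD_unique (f : (Fin 2 → ℝ) → ℂ) (hf : Continuous f) (hper : ZPer f)
    (h0 : ∀ k : Fin 2 → ℤ, fcoeff f k = 0) : ∀ x, f x = 0 := by
  obtain ⟨C, hC⟩ := per_bound f hf hper
  set G : ℤ → ℝ → ℂ := fun k0 b => ∫ a in Set.Ico (0:ℝ) 1, f (q2 (a, b)) * E1 k0 a with hGdef
  have hslice_cont : ∀ b : ℝ, Continuous fun a => f (q2 (a, b)) :=
    fun b => hf.comp (q2_continuous.comp (continuous_id.prodMk continuous_const))
  have hslice_cont' : ∀ a : ℝ, Continuous fun b => f (q2 (a, b)) :=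
    fun a => hf.comp (q2_continuous.comp (continuous_const.prodMk continuous_id))
  have hGcont : ∀ k0 : ℤ, Continuous (G k0) := by
    intro k0
    apply MeasureTheory.continuous_of_dominated (bound := fun _ => C)
    · intro b
      exact (((hslice_cont b).mul (E1_continuous k0))).aestronglyMeasurable
    · intro b
      filter_upwards with a
      rw [norm_mul, E1_norm, mul_one]
      exact hC _
    · exact MeasureTheory.integrableOn_const measure_Ico_lt_top.ne
    · filter_upwards with a
      exact ((hslice_cont' a).mul continuous_const)
  have hGper : ∀ (k0 : ℤ) (b : ℝ), G k0 (b + 1) = G k0 b := by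
    intro k0 b
    apply MeasureTheory.setIntegral_congr_fun measurableSet_Ico
    intro a _
    simp only [q2_shift1]
    rw [hper]
  have hGzero : ∀ (k0 : ℤ) (b : ℝ), G k0 b = 0 := by
    intro k0
    apply oneD_unique (G k0) (hGcont k0) (hGper k0)
    intro k1
    have hrep := (fcoeff_rep' f hf ![k0, k1]).symm
    rw [h0] at hrep
    have : ∀ b : ℝ, (∫ a in Set.Ico (0:ℝ) 1,
        f (q2 (a, b)) * E1 ((![k0, k1] : Fin 2 → ℤ) 0) a * E1 ((![k0, k1] : Fin 2 → ℤ) 1) b)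
        = G k0 b * E1 k1 b := by
      intro b
      rw [hGdef]
      simp only [Matrix.cons_val_zero, Matrix.cons_val_one, Matrix.head_cons]
      rw [← MeasureTheory.integral_mul_const]
    simp_rw [this] at hrep
    exact hrep
  intro x
  have hx : f x = f (q2 (x 0, x 1)) := by rw [← e2_apply, q2_e2]
  rw [hx]
  exact oneD_unique (fun a => f (q2 (a, x 1)))
    (hslice_cont (x 1))
    (fun a => by
      show f (q2 (a + 1, x 1)) = f (q2 (a, x 1))
      rw [q2_shift0, hper])
    (fun k0 => hGzero k0 (x 1)) (x 0)

lemma pd_continuous (f : (Fin 2 → ℝ) → ℝ) (hf : ContDiff ℝ (⊤ : ℕ∞) f) (l : Fin 2) :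
    Continuous (pd l f) :=
  (hf.continuous_fderiv (by simp)).clm_apply continuous_const

lemma slice_hasDerivAt_snd (f : (Fin 2 → ℝ) → ℝ) (hf : ContDiff ℝ (⊤ : ℕ∞) f) (a b : ℝ) :
    HasDerivAt (fun s => ((f (q2 (a, s)) : ℝ) : ℂ)) ((pd 1 f (q2 (a, b)) : ℂ)) b := by
  have hcurve : (fun s : ℝ => q2 (a, s))
      = fun s => q2 (a, 0) + s • (Pi.single 1 1 : Fin 2 → ℝ) := by
    funext s i
    rw [Pi.add_apply, q2_pair_eval, q2_pair_eval]
    match i with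
    | ⟨0, _⟩ => simp
    | ⟨1, _⟩ => simp
  have hq : HasDerivAt (fun s : ℝ => q2 (a, s)) (Pi.single 1 1 : Fin 2 → ℝ) b := by
    rw [hcurve]
    simpa using ((hasDerivAt_id b).smul_const (Pi.single 1 1 : Fin 2 → ℝ)).const_add (q2 (a, 0))
  have hF := ((hf.differentiable (by simp)) (q2 (a, b))).hasFDerivAt
  exact (hF.comp_hasDerivAt b hq).ofReal_comp

lemma slice_hasDerivAt_fst (f : (Fin 2 → ℝ) → ℝ) (hf : ContDiff ℝ (⊤ : ℕ∞) f) (a b : ℝ) :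
    HasDerivAt (fun s => ((f (q2 (s, b)) : ℝ) : ℂ)) ((pd 0 f (q2 (a, b)) : ℂ)) a := by
  have hcurve : (fun s : ℝ => q2 (s, b))
      = fun s => q2 (0, b) + s • (Pi.single 0 1 : Fin 2 → ℝ) := by
    funext s i
    rw [Pi.add_apply, q2_pair_eval, q2_pair_eval]
    match i with
    | ⟨0, _⟩ => simp
    | ⟨1, _⟩ => simp
  have hq : HasDerivAt (fun s : ℝ => q2 (s, b)) (Pi.single 0 1 : Fin 2 → ℝ) a := by
    rw [hcurve]
    simpa using ((hasDerivAt_id a).smul_const (Pi.single 0 1 : Fin 2 → ℝ)).const_add (q2 (0, b))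
  have hF := ((hf.differentiable (by simp)) (q2 (a, b))).hasFDerivAt
  exact (hF.comp_hasDerivAt a hq).ofReal_comp

/-- Fourier coefficients of partial derivatives. -/
lemma fcoeff_pd (f : (Fin 2 → ℝ) → ℝ) (hf : ContDiff ℝ (⊤ : ℕ∞) f) (hper : ZPer f)
    (l : Fin 2) (k : Fin 2 → ℤ) :
    fcoeff (fun x => ((pd l f x : ℝ) : ℂ)) k
      = 2 * Real.pi * Complex.I * (k l) * fcoeff (fun x => ((f x : ℝ) : ℂ)) k := by
  have hfc : Continuous fun x => ((f x : ℝ) : ℂ) :=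
    Complex.continuous_ofReal.comp hf.continuous
  match l with
  | ⟨1, _⟩ =>
    have hpdc : Continuous fun x => ((pd 1 f x : ℝ) : ℂ) :=
      Complex.continuous_ofReal.comp (pd_continuous f hf 1)
    show fcoeff (fun x => ((pd 1 f x : ℝ) : ℂ)) k
      = 2 * Real.pi * Complex.I * (k 1) * fcoeff (fun x => ((f x : ℝ) : ℂ)) k
    rw [fcoeff_rep _ hpdc k, fcoeff_rep _ hfc k]
    have key : ∀ a : ℝ, (∫ b in Set.Ico (0:ℝ) 1,
        ((pd 1 f (q2 (a, b)) : ℝ) : ℂ) * E1 (k 0) a * E1 (k 1) b)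
        = 2 * Real.pi * Complex.I * (k 1) * ∫ b in Set.Ico (0:ℝ) 1,
            ((f (q2 (a, b)) : ℝ) : ℂ) * E1 (k 0) a * E1 (k 1) b := by
      intro a
      have h1 : ∀ b : ℝ, ((pd 1 f (q2 (a, b)) : ℝ) : ℂ) * E1 (k 0) a * E1 (k 1) b
          = E1 (k 0) a * (((pd 1 f (q2 (a, b)) : ℝ) : ℂ) * E1 (k 1) b) := fun b => by ring
      have h2 : ∀ b : ℝ, ((f (q2 (a, b)) : ℝ) : ℂ) * E1 (k 0) a * E1 (k 1) b
          = E1 (k 0) a * (((f (q2 (a, b)) : ℝ) : ℂ) * E1 (k 1) b) := fun b => by ring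
      simp_rw [h1, h2, MeasureTheory.integral_const_mul]
      rw [oneD_deriv_coeff (fun b => ((f (q2 (a, b)) : ℝ) : ℂ))
        (fun b => ((pd 1 f (q2 (a, b)) : ℝ) : ℂ))
        (fun b => slice_hasDerivAt_snd f hf a b)
        (Complex.continuous_ofReal.comp
          ((pd_continuous f hf 1).comp
            (q2_continuous.comp (continuous_const.prodMk continuous_id))))
        (fun b => by
          show ((f (q2 (a, b + 1)) : ℝ) : ℂ) = _
          rw [q2_shift1, hper])
        (k 1)]
      ring
    simp_rw [key]
    rw [MeasureTheory.integral_const_mul]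
  | ⟨0, _⟩ =>
    have hpdc : Continuous fun x => ((pd 0 f x : ℝ) : ℂ) :=
      Complex.continuous_ofReal.comp (pd_continuous f hf 0)
    show fcoeff (fun x => ((pd 0 f x : ℝ) : ℂ)) k
      = 2 * Real.pi * Complex.I * (k 0) * fcoeff (fun x => ((f x : ℝ) : ℂ)) k
    rw [fcoeff_rep' _ hpdc k, fcoeff_rep' _ hfc k]
    have key : ∀ b : ℝ, (∫ a in Set.Ico (0:ℝ) 1,
        ((pd 0 f (q2 (a, b)) : ℝ) : ℂ) * E1 (k 0) a * E1 (k 1) b)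
        = 2 * Real.pi * Complex.I * (k 0) * ∫ a in Set.Ico (0:ℝ) 1,
            ((f (q2 (a, b)) : ℝ) : ℂ) * E1 (k 0) a * E1 (k 1) b := by
      intro b
      have h1 : ∀ a : ℝ, ((pd 0 f (q2 (a, b)) : ℝ) : ℂ) * E1 (k 0) a * E1 (k 1) b
          = E1 (k 1) b * (((pd 0 f (q2 (a, b)) : ℝ) : ℂ) * E1 (k 0) a) := fun a => by ring
      have h2 : ∀ a : ℝ, ((f (q2 (a, b)) : ℝ) : ℂ) * E1 (k 0) a * E1 (k 1) b
          = E1 (k 1) b * (((f (q2 (a, b)) : ℝ) : ℂ) * E1 (k 0) a) := fun a => by ring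
      simp_rw [h1, h2, MeasureTheory.integral_const_mul]
      rw [oneD_deriv_coeff (fun a => ((f (q2 (a, b)) : ℝ) : ℂ))
        (fun a => ((pd 0 f (q2 (a, b)) : ℝ) : ℂ))
        (fun a => slice_hasDerivAt_fst f hf a b)
        (Complex.continuous_ofReal.comp
          ((pd_continuous f hf 0).comp
            (q2_continuous.comp (continuous_id.prodMk continuous_const))))
        (fun a => by
          show ((f (q2 (a + 1, b)) : ℝ) : ℂ) = _
          rw [q2_shift0, hper])
        (k 0)]
      ring
    simp_rw [key]
    rw [MeasureTheory.integral_const_mul]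

lemma cube_measurable : MeasurableSet (cube 2) :=
  MeasurableSet.univ_pi fun _ => measurableSet_Ico

lemma fcoeff_integrableOn (f : (Fin 2 → ℝ) → ℂ) (hf : Continuous f) (k : Fin 2 → ℤ) :
    MeasureTheory.IntegrableOn
      (fun x => f x * Complex.exp (-(2 * Real.pi * Complex.I * ∑ i, (k i : ℝ) * x i)))
      (cube 2) volume := by
  have hc : Continuous fun x : Fin 2 → ℝ =>
      f x * Complex.exp (-(2 * Real.pi * Complex.I * ∑ i, (k i : ℝ) * x i)) := by
    fun_prop
  have hK : IsCompact (Set.univ.pi fun _ : Fin 2 => Set.Icc (0:ℝ) 1) :=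
    isCompact_univ_pi fun _ => isCompact_Icc
  exact (hc.continuousOn.integrableOn_compact hK).mono_set
    (Set.pi_mono fun i _ => Set.Ico_subset_Icc_self)

lemma fcoeff_add (f g : (Fin 2 → ℝ) → ℂ) (hf : Continuous f) (hg : Continuous g)
    (k : Fin 2 → ℤ) : fcoeff (fun x => f x + g x) k = fcoeff f k + fcoeff g k := by
  unfold fcoeff
  simp_rw [add_mul]
  exact MeasureTheory.integral_add (fcoeff_integrableOn f hf k) (fcoeff_integrableOn g hg k)

lemma fcoeff_sub (f g : (Fin 2 → ℝ) → ℂ) (hf : Continuous f) (hg : Continuous g)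
    (k : Fin 2 → ℤ) : fcoeff (fun x => f x - g x) k = fcoeff f k - fcoeff g k := by
  unfold fcoeff
  simp_rw [sub_mul]
  exact MeasureTheory.integral_sub (fcoeff_integrableOn f hf k) (fcoeff_integrableOn g hg k)

/-- Partial derivatives of periodic functions are periodic. -/
lemma pd_per (f : (Fin 2 → ℝ) → ℝ) (hf : ContDiff ℝ (⊤ : ℕ∞) f) (hper : ZPer f) (l : Fin 2) :
    ZPer (pd l f) := by
  intro kk x
  set c : Fin 2 → ℝ := fun i => ((kk i : ℤ) : ℝ) with hc
  have hfd : fderiv ℝ f (x + c) = fderiv ℝ f x := by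
    have ht : HasFDerivAt (fun y : Fin 2 → ℝ => y + c) (ContinuousLinearMap.id ℝ _) x :=
      (hasFDerivAt_id x).add_const c
    have h1 : HasFDerivAt (fun y => f (y + c)) (fderiv ℝ f (x + c)) x := by
      have := ((hf.differentiable (by simp)) (x + c)).hasFDerivAt
      simpa [Function.comp_def] using this.comp x ht
    have h2 : (fun y => f (y + c)) = f := funext fun y => hper kk y
    rw [h2] at h1
    exact h1.fderiv.symm
  show fderiv ℝ f (x + c) (Pi.single l 1) = fderiv ℝ f x (Pi.single l 1)
  rw [hfd]

lemma Lsym_id (m : (Fin 2 → ℝ) → Fin 2 → ℂ) (k : Fin 2 → ℤ) (hk : k ≠ 0)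
    (hdiv : ((k 0 : ℝ) : ℂ) * m (fun i => (k i : ℝ)) 0
        + ((k 1 : ℝ) : ℂ) * m (fun i => (k i : ℝ)) 1 = 0) :
    2 * Real.pi * Complex.I * ((k 0 : ℤ) : ℂ) * Lsym m k = m (fun i => (k i : ℝ)) 1
    ∧ 2 * Real.pi * Complex.I * ((k 1 : ℤ) : ℂ) * Lsym m k
        = -(m (fun i => (k i : ℝ)) 0) := by
  have hk' : ∃ i, k i ≠ 0 := by
    by_contra h
    push_neg at h
    exact hk (funext h)
  have hr : ((k 0 : ℝ)) ^ 2 + ((k 1 : ℝ)) ^ 2 ≠ 0 := by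
    obtain ⟨i, hi⟩ := hk'
    have hi' : ((k i : ℝ)) ≠ 0 := Int.cast_ne_zero.mpr hi
    match i with
    | ⟨0, _⟩ =>
      have : ((k 0 : ℝ)) ≠ 0 := hi'
      positivity
    | ⟨1, _⟩ =>
      have : ((k 1 : ℝ)) ≠ 0 := hi'
      positivity
  have hden : (((k 0 : ℝ) : ℂ)) ^ 2 + (((k 1 : ℝ) : ℂ)) ^ 2 ≠ 0 := by
    rw [show (((k 0 : ℝ) : ℂ)) ^ 2 + (((k 1 : ℝ) : ℂ)) ^ 2
      = ((((k 0 : ℝ)) ^ 2 + ((k 1 : ℝ)) ^ 2 : ℝ) : ℂ) by push_cast; ring]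
    exact Complex.ofReal_ne_zero.mpr hr
  have hπ : ((Real.pi : ℝ) : ℂ) ≠ 0 := Complex.ofReal_ne_zero.mpr Real.pi_ne_zero
  have hD : ((2 : ℂ) * ((Real.pi : ℝ) : ℂ)
      * ((((k 0 : ℝ)) : ℂ) ^ 2 + (((k 1 : ℝ)) : ℂ) ^ 2)) ≠ 0 :=
    mul_ne_zero (mul_ne_zero two_ne_zero hπ) hden
  rw [Lsym, if_neg hk]
  set m0 := m (fun i => (k i : ℝ)) 0
  set m1 := m (fun i => (k i : ℝ)) 1
  push_cast at hdiv ⊢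
  constructor
  · rw [← mul_div_assoc, div_eq_iff (by push_cast at hD; exact hD)]
    linear_combination (-(2 * ((Real.pi : ℝ) : ℂ) * ((k 1 : ℤ) : ℂ))) * hdiv
      + (2 * ((Real.pi : ℝ) : ℂ) * (((k 0 : ℤ) : ℂ) * ((k 1 : ℤ) : ℂ) * m0
          - ((k 0 : ℤ) : ℂ) ^ 2 * m1)) * Complex.I_sq
  · rw [← mul_div_assoc, div_eq_iff (by push_cast at hD; exact hD)]
    linear_combination (2 * ((Real.pi : ℝ) : ℂ) * ((k 0 : ℤ) : ℂ)) * hdiv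
      + (2 * ((Real.pi : ℝ) : ℂ) * (((k 1 : ℤ) : ℂ) ^ 2 * m0
          - ((k 0 : ℤ) : ℂ) * ((k 1 : ℤ) : ℂ) * m1)) * Complex.I_sq

end Aux

/-- for an odd multiplier in 2D and a smooth mean-zero `θ`, the drift
velocity satisfies `u = ∇^⊥ Lθ`, and consequently `∫ θ u·∇(Lθ) dx =
∫ θ ∇^⊥(Lθ)·∇(Lθ) dx = 0`. -/
theorem odd_symbol_drift_is_perp_gradient
    (m : (Fin 2 → ℝ) → Fin 2 → ℂ) (hm : GoodSymbol 2 m) (hodd : OddSymbol m)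
    (θ : (Fin 2 → ℝ) → ℝ) (hθ : ContDiff ℝ (⊤ : ℕ∞) θ) (hθper : ZPer θ)
    (hθmean : (∫ x in cube 2, θ x) = 0)
    (u : (Fin 2 → ℝ) → Fin 2 → ℝ) (hu : Continuous u) (huper : ZPer u)
    (hdrift : IsDrift m θ u)
    (Lθ : (Fin 2 → ℝ) → ℝ) (hLθ : ContDiff ℝ (⊤ : ℕ∞) Lθ) (hLθper : ZPer Lθ)
    (hLθdef : IsLOf m θ Lθ) :
    (∀ x, u x 0 = -(pd 1 Lθ x) ∧ u x 1 = pd 0 Lθ x) ∧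
    (∫ x in cube 2, θ x * ∑ l, u x l * pd l Lθ x) = 0 := by
    classical
  have hu0c : Continuous fun x => ((u x 0 : ℝ) : ℂ) :=
    Complex.continuous_ofReal.comp ((continuous_apply (0 : Fin 2)).comp hu)
  have hu1c : Continuous fun x => ((u x 1 : ℝ) : ℂ) :=
    Complex.continuous_ofReal.comp ((continuous_apply (1 : Fin 2)).comp hu)
  have hpd0c : Continuous fun x => ((pd 0 Lθ x : ℝ) : ℂ) :=
    Complex.continuous_ofReal.comp (pd_continuous Lθ hLθ 0)
  have hpd1c : Continuous fun x => ((pd 1 Lθ x : ℝ) : ℂ) :=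
    Complex.continuous_ofReal.comp (pd_continuous Lθ hLθ 1)
  -- key identities for the symbol of L on nonzero frequencies
  have hLid : ∀ k : Fin 2 → ℤ, k ≠ 0 →
      (2 * Real.pi * Complex.I * ((k 0 : ℤ) : ℂ) * Lsym m k = m (fun i => (k i : ℝ)) 1
        ∧ 2 * Real.pi * Complex.I * ((k 1 : ℤ) : ℂ) * Lsym m k
            = -(m (fun i => (k i : ℝ)) 0)) := by
    intro k hk
    have hξ : (fun i => ((k i : ℤ) : ℝ)) ≠ 0 := by
      intro h
      apply hk
      funext i
      have := congrFun h i
      simpa using this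
    have hdiv := hm.div_free (fun i => ((k i : ℤ) : ℝ)) hξ
    rw [Fin.sum_univ_two] at hdiv
    exact Lsym_id m k hk hdiv
  -- first component: u⁰ = -∂₂ Lθ
  have hv0coeff : ∀ k : Fin 2 → ℤ,
      fcoeff (fun x => ((u x 0 : ℝ) : ℂ) + ((pd 1 Lθ x : ℝ) : ℂ)) k = 0 := by
    intro k
    rw [fcoeff_add _ _ hu0c hpd1c, hdrift 0 k, fcoeff_pd Lθ hLθ hLθper 1 k, hLθdef k]
    by_cases hk : k = 0
    · subst hk
      simp [Lsym]
    · rw [if_neg hk]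
      have h2 := (hLid k hk).2
      linear_combination (fcoeff (fun x => ((θ x : ℝ) : ℂ)) k) * h2
  have hv0per : ZPer fun x => ((u x 0 : ℝ) : ℂ) + ((pd 1 Lθ x : ℝ) : ℂ) := by
    intro kk x
    have h1 : u (x + fun i => ((kk i : ℤ) : ℝ)) 0 = u x 0 := congrFun (huper kk x) 0
    have h2 := pd_per Lθ hLθ hLθper 1 kk x
    simp only [h1, h2]
  have hv0 := twoD_unique _ (hu0c.add hpd1c) hv0per hv0coeff
  have part10 : ∀ x, u x 0 = -(pd 1 Lθ x) := by
    intro x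
    have h := eq_neg_of_add_eq_zero_left (hv0 x)
    beta_reduce at h
    exact_mod_cast h
  -- second component: u¹ = ∂₁ Lθ
  have hv1coeff : ∀ k : Fin 2 → ℤ,
      fcoeff (fun x => ((u x 1 : ℝ) : ℂ) - ((pd 0 Lθ x : ℝ) : ℂ)) k = 0 := by
    intro k
    rw [fcoeff_sub _ _ hu1c hpd0c, hdrift 1 k, fcoeff_pd Lθ hLθ hLθper 0 k, hLθdef k]
    by_cases hk : k = 0
    · subst hk
      simp [Lsym]
    · rw [if_neg hk]
      have h1 := (hLid k hk).1
      linear_combination (-(fcoeff (fun x => ((θ x : ℝ) : ℂ)) k)) * h1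
  have hv1per : ZPer fun x => ((u x 1 : ℝ) : ℂ) - ((pd 0 Lθ x : ℝ) : ℂ) := by
    intro kk x
    have h1 : u (x + fun i => ((kk i : ℤ) : ℝ)) 1 = u x 1 := congrFun (huper kk x) 1
    have h2 := pd_per Lθ hLθ hLθper 0 kk x
    simp only [h1, h2]
  have hv1 := twoD_unique _ (hu1c.sub hpd0c) hv1per hv1coeff
  have part11 : ∀ x, u x 1 = pd 0 Lθ x := by
    intro x
    have h := sub_eq_zero.mp (hv1 x)
    beta_reduce at h
    exact_mod_cast h
  refine ⟨fun x => ⟨part10 x, part11 x⟩, ?_⟩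
  have hzero : ∀ x, θ x * ∑ l, u x l * pd l Lθ x = 0 := by
    intro x
    rw [Fin.sum_univ_two, part10 x, part11 x]
    ring
  rw [MeasureTheory.setIntegral_congr_fun cube_measurable
    (g := fun _ => (0:ℝ)) (fun x _ => hzero x)]
  simp
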